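/- arXiv:1805.10653 — 4 statements merged into one kernel-verified Lean document; each statement's English description precedes it below -/
import Mathlib

section
/- The Legendre transform of Λ(t) = (1-√(1-8t))/4 for t ≤ 1/8 (and +∞ for t > 1/8) evaluated at x > 0 equals (x-1)²/(8x). -/
open Real

/-- Legendre transform of `Λ(t) = (1 - √(1-8t))/4` for `t ≤ 1/8` (and `+∞` otherwise):
`Λ*(x) = (x-1)²/(8x)` for `x > 0`, and `Λ*(x) = +∞` for `x ≤ 0`. -/
theorem legendre_transform_of_Lambda
    (Λ : ℝ → EReal)
    (hΛ : ∀ t : ℝ, Λ t = if t ≤ 1/8 then (((1 - Real.sqrt (1 - 8*t)) / 4 : ℝ) : EReal) else ⊤)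
    (Λstar : ℝ → EReal)
    (hΛstar : ∀ x : ℝ, Λstar x = ⨆ t : ℝ, (((t * x : ℝ) : EReal) - Λ t)) :
    (∀ x : ℝ, 0 < x → Λstar x = (((x - 1) ^ 2 / (8 * x) : ℝ) : EReal)) ∧
    (∀ x : ℝ, 0 < x → (x - 1) ^ 2 / (8 * x) = x / 8 + 1 / (8 * x) - 1 / 4) ∧
    (∀ x : ℝ, x ≤ 0 → Λstar x = ⊤) := by
  refine ⟨?_, ?_, ?_⟩
  · intro x hx
    rw [hΛstar]
    apply le_antisymm
    · apply iSup_le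
      intro t
      rw [hΛ]
      by_cases ht : t ≤ 1/8
      · rw [if_pos ht, ← EReal.coe_sub, EReal.coe_le_coe_iff]
        have hs0 : 0 ≤ Real.sqrt (1 - 8*t) := Real.sqrt_nonneg _
        have hs : (Real.sqrt (1 - 8*t))^2 = 1 - 8*t := Real.sq_sqrt (by linarith)
        have h8x : (0:ℝ) < 8*x := by linarith
        rw [le_div_iff₀ h8x]
        nlinarith [sq_nonneg (Real.sqrt (1 - 8*t) * x - 1), mul_pos hx hx]
      · rw [if_neg ht]
        simp
    · set t₀ : ℝ := (1 - 1/x^2)/8 with ht₀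
      have hle : t₀ ≤ 1/8 := by
        have : 0 < 1/x^2 := by positivity
        rw [ht₀]; linarith
      have h1 : 1 - 8*t₀ = (1/x)^2 := by
        rw [ht₀]; field_simp; ring
      have hsq : Real.sqrt (1 - 8*t₀) = 1/x := by
        rw [h1, Real.sqrt_sq (by positivity)]
      have key : ((t₀ * x : ℝ) : EReal) - Λ t₀ = (((x - 1) ^ 2 / (8 * x) : ℝ) : EReal) := by
        rw [hΛ, if_pos hle, hsq, ← EReal.coe_sub, EReal.coe_eq_coe_iff]
        rw [ht₀]; field_simp; ring
      calc (((x - 1) ^ 2 / (8 * x) : ℝ) : EReal) = ((t₀ * x : ℝ) : EReal) - Λ t₀ := key.symm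
        _ ≤ ⨆ t : ℝ, (((t * x : ℝ) : EReal) - Λ t) := le_iSup (fun t : ℝ => (((t * x : ℝ) : EReal) - Λ t)) t₀
  · intro x hx
    field_simp
    ring
  · intro x hx
    rw [hΛstar, iSup_eq_top]
    intro b hb
    induction b using EReal.rec with
    | top => exact absurd hb (lt_irrefl ⊤)
    | bot =>
      refine ⟨0, ?_⟩
      rw [hΛ, if_pos (by norm_num), ← EReal.coe_sub]
      exact EReal.bot_lt_coe _
    | coe r =>
      set t : ℝ := -2*(|r|+1)^2 with htdef
      refine ⟨t, ?_⟩
      have hle : t ≤ 1/8 := by nlinarith [sq_nonneg (|r|+1)]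
      rw [hΛ, if_pos hle, ← EReal.coe_sub, EReal.coe_lt_coe_iff]
      have habs : 0 ≤ |r| := abs_nonneg r
      have hra : r ≤ |r| := le_abs_self r
      have htx : 0 ≤ t * x := by
        have h := mul_nonneg (show (0:ℝ) ≤ 2*(|r|+1)^2 by positivity) (show (0:ℝ) ≤ -x by linarith)
        nlinarith [h]
      have hsl : (4*(|r|+1)) ≤ Real.sqrt (1 - 8*t) := by
        have : Real.sqrt ((4*(|r|+1))^2) ≤ Real.sqrt (1 - 8*t) := by
          apply Real.sqrt_le_sqrt
          nlinarith [sq_nonneg (|r|+1)]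
        rwa [Real.sqrt_sq (by positivity)] at this
      linarith
end

section
/- Gambler's-ruin-type domination: if (S_i) is a simple symmetric random walk started at 0 and (S_i^x) is a simple symmetric random walk started at an even integer x, coupled by reflecting at the first time the second walk hits x/2, then |S_i^x| ≥ |S_i| for all i. -/
open MeasureTheory ProbabilityTheory
open scoped ENNReal


namespace ReflectionCouplingAux

def ps (a : ℕ → ℤ) (j : ℕ) : ℤ := ∑ l ∈ Finset.range j, a l

def nohit (m : ℤ) (a : ℕ → ℤ) (k : ℕ) : Prop := ∀ j ≤ k, ps a j ≠ m

instance nohit.dec (m : ℤ) (a : ℕ → ℤ) (k : ℕ) : Decidable (nohit m a k) :=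
  inferInstanceAs (Decidable (∀ j ≤ k, ps a j ≠ m))

def flipInf (m : ℤ) (a : ℕ → ℤ) : ℕ → ℤ := fun k => if nohit m a k then -a k else a k

def pad (n : ℕ) (f : ℕ → ℤ) : ℕ → ℤ := fun k => if k < n then f k else 0

def flipG (m : ℤ) (n : ℕ) (a : ℕ → ℤ) : ℕ → ℤ :=
  fun k => if k < n then (if nohit m a k then -a k else a k) else 0

def sgn (m : ℤ) (n : ℕ) (a : ℕ → ℤ) : ℤ := if nohit m a n then -1 else 1

def Kmap (n : ℕ) (p : (ℕ → ℤ) × ℤ) : ℕ → ℤ :=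
  fun k => if k < n then p.1 k else if k = n then p.2 else 0

lemma ps_zero (a : ℕ → ℤ) : ps a 0 = 0 := by simp [ps]

lemma ps_succ (a : ℕ → ℤ) (j : ℕ) : ps a (j + 1) = ps a j + a j := Finset.sum_range_succ a j

lemma measurable_ps (j : ℕ) : Measurable fun a : ℕ → ℤ => ps a j :=
  Finset.measurable_sum _ fun l _ => measurable_pi_apply l

lemma measurableSet_nohit (m : ℤ) (k : ℕ) : MeasurableSet {a : ℕ → ℤ | nohit m a k} := by
  have : {a : ℕ → ℤ | nohit m a k} = ⋂ j, ⋂ (_ : j ≤ k), (fun a => ps a j) ⁻¹' ({m}ᶜ) := by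
    ext a; simp [nohit]
  rw [this]
  exact MeasurableSet.iInter fun j => MeasurableSet.iInter fun _ =>
    measurable_ps j (measurableSet_singleton m).compl

lemma measurable_flipInf (m : ℤ) : Measurable (flipInf m) :=
  measurable_pi_lambda _ fun k =>
    Measurable.ite (measurableSet_nohit m k) (measurable_pi_apply k).neg (measurable_pi_apply k)

lemma measurable_pad (n : ℕ) : Measurable (pad n) := by
  refine measurable_pi_lambda _ fun k => ?_
  by_cases h : k < n
  · simpa [pad, h] using (measurable_pi_apply k)
  · simpa [pad, h] using (measurable_const : Measurable fun _ : ℕ → ℤ => (0 : ℤ))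

lemma measurable_flipG (m : ℤ) (n : ℕ) : Measurable (flipG m n) := by
  refine measurable_pi_lambda _ fun k => ?_
  by_cases h : k < n
  · simpa [flipG, h] using
      (Measurable.ite (measurableSet_nohit m k) (measurable_pi_apply k).neg (measurable_pi_apply k) :
        Measurable fun a : ℕ → ℤ => if nohit m a k then -a k else a k)
  · simpa [flipG, h] using (measurable_const : Measurable fun _ : ℕ → ℤ => (0 : ℤ))

lemma measurable_sgn (m : ℤ) (n : ℕ) : Measurable (sgn m n) :=
  Measurable.ite (measurableSet_nohit m n) measurable_const measurable_const

lemma measurable_Kmap (n : ℕ) : Measurable (Kmap n) := by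
  refine measurable_pi_lambda _ fun k => ?_
  by_cases h : k < n
  · simpa [Kmap, h, Function.comp_def] using ((measurable_pi_apply k).comp measurable_fst)
  · by_cases h2 : k = n
    · simpa [Kmap, h, h2] using measurable_snd
    · simpa [Kmap, h, h2] using (measurable_const : Measurable fun _ : (ℕ → ℤ) × ℤ => (0 : ℤ))

lemma ps_pad (n : ℕ) (a : ℕ → ℤ) {j : ℕ} (hj : j ≤ n) : ps (pad n a) j = ps a j := by
  refine Finset.sum_congr rfl fun l hl => ?_
  have : l < n := lt_of_lt_of_le (Finset.mem_range.mp hl) hj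
  simp [pad, this]

lemma nohit_pad (m : ℤ) (n : ℕ) (a : ℕ → ℤ) {k : ℕ} (hk : k ≤ n) :
    nohit m (pad n a) k ↔ nohit m a k := by
  unfold nohit
  exact forall₂_congr fun j hj => by rw [ps_pad n a (le_trans hj hk)]

lemma ps_flipInf (m : ℤ) (a : ℕ → ℤ) (i : ℕ) :
    2 * m + ps (flipInf m a) i = if nohit m a i then 2 * m - ps a i else ps a i := by
  induction i with
  | zero =>
    by_cases h : nohit m a 0
    · simp [h, ps_zero]
    · have hm : m = 0 := by
        by_contra hm
        exact h fun j hj => by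
          interval_cases j
          · rw [ps_zero]; omega
      simp [h, ps_zero, hm]
  | succ i ih =>
    have hps : ps (flipInf m a) (i + 1) = ps (flipInf m a) i + flipInf m a i := ps_succ _ i
    have ha : ps a (i + 1) = ps a i + a i := ps_succ a i
    by_cases h1 : nohit m a (i + 1)
    · have h0 : nohit m a i := fun j hj => h1 j (by omega)
      rw [if_pos h1]
      rw [if_pos h0] at ih
      have hf : flipInf m a i = -a i := if_pos h0
      omega
    · by_cases h0 : nohit m a i
      · have hm : ps a (i + 1) = m := by
          by_contra hne
          exact h1 fun j hj => by
            rcases Nat.lt_succ_iff_lt_or_eq.mp (Nat.lt_succ_of_le hj) with h | h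
            · exact h0 j (by omega)
            · rw [h]; exact hne
        rw [if_neg h1]
        rw [if_pos h0] at ih
        have hf : flipInf m a i = -a i := if_pos h0
        omega
      · have hf : flipInf m a i = a i := if_neg h0
        rw [if_neg h1]
        rw [if_neg h0] at ih
        omega

lemma stay_side (m : ℤ) (a : ℕ → ℤ) (ha : ∀ k, a k = 1 ∨ a k = -1) (i : ℕ)
    (h : nohit m a i) : |ps a i| ≤ |2 * m - ps a i| := by
  have hm0 : m ≠ 0 := by
    have := h 0 (Nat.zero_le i)
    rw [ps_zero] at this
    omega
  have key : ∀ j, j ≤ i → (0 < m → ps a j < m) ∧ (m < 0 → m < ps a j) := by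
    intro j
    induction j with
    | zero => intro _; rw [ps_zero]; omega
    | succ j ihj =>
      intro hji
      obtain ⟨l1, l2⟩ := ihj (by omega)
      have hne := h (j + 1) hji
      have hstep := ha j
      have e : ps a (j + 1) = ps a j + a j := ps_succ a j
      omega
  obtain ⟨l1, l2⟩ := key i le_rfl
  rcases abs_cases (ps a i) with ⟨e1, s1⟩ | ⟨e1, s1⟩ <;>
    rcases abs_cases (2 * m - ps a i) with ⟨e2, s2⟩ | ⟨e2, s2⟩ <;> omega

lemma flipG_pad (m : ℤ) (n : ℕ) (a : ℕ → ℤ) :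
    flipG m n (pad n a) = pad n (flipInf m a) := by
  funext k
  by_cases hk : k < n
  · show (if k < n then (if nohit m (pad n a) k then -(pad n a k) else pad n a k) else 0)
      = if k < n then (if nohit m a k then -a k else a k) else 0
    rw [if_pos hk, if_pos hk, if_congr (nohit_pad m n a (le_of_lt hk)) rfl rfl,
      show pad n a k = a k from if_pos hk]
  · show (if k < n then _ else (0 : ℤ)) = if k < n then _ else 0
    rw [if_neg hk, if_neg hk]

lemma sgn_pad (m : ℤ) (n : ℕ) (a : ℕ → ℤ) : sgn m n (pad n a) = sgn m n a := by
  unfold sgn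
  rw [if_congr (nohit_pad m n a le_rfl) rfl rfl]

lemma pad_succ (n : ℕ) (a : ℕ → ℤ) : pad (n + 1) a = Kmap n (pad n a, a n) := by
  funext k
  show (if k < n + 1 then a k else 0) = if k < n then pad n a k else if k = n then a n else 0
  by_cases hk : k < n
  · rw [if_pos (by omega : k < n + 1), if_pos hk, show pad n a k = a k from if_pos hk]
  · by_cases hk2 : k = n
    · subst hk2
      rw [if_pos (Nat.lt_succ_self k), if_neg (lt_irrefl k), if_pos rfl]
    · rw [if_neg (by omega : ¬ k < n + 1), if_neg hk, if_neg hk2]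

lemma pad_succ_flip (m : ℤ) (n : ℕ) (a : ℕ → ℤ) :
    pad (n + 1) (flipInf m a)
      = Kmap n (Prod.map (flipG m n) id (pad n a, sgn m n (pad n a) * a n)) := by
  have h1 : Prod.map (flipG m n) id (pad n a, sgn m n (pad n a) * a n)
      = (pad n (flipInf m a), sgn m n a * a n) := by
    rw [Prod.map, id, flipG_pad, sgn_pad]
  have h2 : sgn m n a * a n = flipInf m a n := by
    show (if nohit m a n then (-1 : ℤ) else 1) * a n = (if nohit m a n then -a n else a n)
    by_cases h : nohit m a n
    · rw [if_pos h, if_pos h, neg_one_mul]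
    · rw [if_neg h, if_neg h, one_mul]
  rw [h1, h2, ← pad_succ]

lemma flip_pair {Ω α : Type*} [MeasurableSpace Ω] [MeasurableSpace α]
    (P : Measure Ω) [IsProbabilityMeasure P]
    (X : Ω → α) (Y : Ω → ℤ) (hX : Measurable X) (hY : Measurable Y)
    (hind : IndepFun X Y P)
    (hsym : Measure.map (fun z : ℤ => -z) (Measure.map Y P) = Measure.map Y P)
    (c : α → ℤ) (hc : Measurable c) (hc1 : ∀ a, c a = 1 ∨ c a = -1) :
    Measure.map (fun ω => (X ω, c (X ω) * Y ω)) P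
      = Measure.map (fun ω => (X ω, Y ω)) P := by
  have hZ : Measurable fun ω => c (X ω) * Y ω := (hc.comp hX).mul hY
  have hYsym : ∀ B : Set ℤ, MeasurableSet B →
      P (Y ⁻¹' ((fun z : ℤ => -z) ⁻¹' B)) = P (Y ⁻¹' B) := by
    intro B hB
    have h1 : P (Y ⁻¹' ((fun z : ℤ => -z) ⁻¹' B))
        = Measure.map (fun z : ℤ => -z) (Measure.map Y P) B := by
      rw [Measure.map_map measurable_neg hY, Measure.map_apply (measurable_neg.comp hY) hB]
      rfl
    rw [h1, hsym, Measure.map_apply hY hB]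
  have key : ∀ A : Set α, MeasurableSet A → ∀ B : Set ℤ, MeasurableSet B →
      P (X ⁻¹' A ∩ (fun ω => c (X ω) * Y ω) ⁻¹' B) = P (X ⁻¹' A) * P (Y ⁻¹' B) := by
    intro A hA B hB
    set A1 := A ∩ c ⁻¹' {1} with hA1def
    set A2 := A ∩ c ⁻¹' {-1} with hA2def
    have hA1 : MeasurableSet A1 := hA.inter (hc (measurableSet_singleton _))
    have hA2 : MeasurableSet A2 := hA.inter (hc (measurableSet_singleton _))
    have hsplit : X ⁻¹' A ∩ (fun ω => c (X ω) * Y ω) ⁻¹' B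
        = (X ⁻¹' A1 ∩ Y ⁻¹' B) ∪ (X ⁻¹' A2 ∩ Y ⁻¹' ((fun z : ℤ => -z) ⁻¹' B)) := by
      ext ω
      rcases hc1 (X ω) with h | h <;>
        simp [hA1def, hA2def, Set.mem_preimage, h, one_mul, neg_one_mul]
    have hdisj : Disjoint (X ⁻¹' A1 ∩ Y ⁻¹' B)
        (X ⁻¹' A2 ∩ Y ⁻¹' ((fun z : ℤ => -z) ⁻¹' B)) := by
      rw [Set.disjoint_left]
      rintro ω ⟨h1, -⟩ ⟨h2, -⟩
      have e1 : c (X ω) = 1 := h1.2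
      have e2 : c (X ω) = -1 := h2.2
      omega
    have hmi := indepFun_iff_measure_inter_preimage_eq_mul.mp hind
    have hdisj2 : Disjoint (X ⁻¹' A1) (X ⁻¹' A2) := by
      rw [Set.disjoint_left]
      rintro ω h1 h2
      have e1 : c (X ω) = 1 := h1.2
      have e2 : c (X ω) = -1 := h2.2
      omega
    have hAu : X ⁻¹' A1 ∪ X ⁻¹' A2 = X ⁻¹' A := by
      ext ω
      rcases hc1 (X ω) with h | h <;> simp [hA1def, hA2def, h]
    rw [hsplit, measure_union hdisj ((hX hA2).inter (hY (measurable_neg hB))),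
      hmi A1 B hA1 hB, hmi A2 _ hA2 (measurable_neg hB), hYsym B hB, ← add_mul,
      ← measure_union hdisj2 (hX hA2), hAu]
  have hZlaw : Measure.map (fun ω => c (X ω) * Y ω) P = Measure.map Y P := by
    ext B hB
    rw [Measure.map_apply hZ hB, Measure.map_apply hY hB]
    have := key Set.univ MeasurableSet.univ B hB
    simpa using this
  have hindZ : IndepFun X (fun ω => c (X ω) * Y ω) P := by
    rw [indepFun_iff_measure_inter_preimage_eq_mul]
    intro A B hA hB
    rw [key A hA B hB]
    congr 1
    rw [← Measure.map_apply hY hB, ← hZlaw, Measure.map_apply hZ hB]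
  rw [(indepFun_iff_map_prod_eq_prod_map_map hX.aemeasurable hZ.aemeasurable).mp hindZ,
    hZlaw, ← (indepFun_iff_map_prod_eq_prod_map_map hX.aemeasurable hY.aemeasurable).mp hind]

lemma steps_ae {Ω : Type*} [MeasurableSpace Ω] (P : Measure Ω) (Y : Ω → ℤ) (hm : Measurable Y)
    (hd : Measure.map Y P
      = (1/2 : ℝ≥0∞) • Measure.dirac (1 : ℤ) + (1/2 : ℝ≥0∞) • Measure.dirac (-1 : ℤ)) :
    ∀ᵐ ω ∂P, Y ω = 1 ∨ Y ω = -1 := by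
  rw [ae_iff]
  have hBm : MeasurableSet (({1} ∪ {-1} : Set ℤ)ᶜ) :=
    ((measurableSet_singleton 1).union (measurableSet_singleton (-1))).compl
  have hset : {ω | ¬(Y ω = 1 ∨ Y ω = -1)} = Y ⁻¹' (({1} ∪ {-1} : Set ℤ)ᶜ) := by
    ext ω; simp; tauto
  rw [hset, ← Measure.map_apply hm hBm, hd]
  simp [Measure.dirac_apply']

lemma sym_law {Ω : Type*} [MeasurableSpace Ω] (P : Measure Ω) (Y : Ω → ℤ)
    (hd : Measure.map Y P
      = (1/2 : ℝ≥0∞) • Measure.dirac (1 : ℤ) + (1/2 : ℝ≥0∞) • Measure.dirac (-1 : ℤ)) :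
    Measure.map (fun z : ℤ => -z) (Measure.map Y P) = Measure.map Y P := by
  rw [hd, Measure.map_add _ _ measurable_neg, Measure.map_smul, Measure.map_smul,
    Measure.map_dirac' measurable_neg, Measure.map_dirac' measurable_neg]
  simp [add_comm]


lemma sgn_pm (m : ℤ) (n : ℕ) (a : ℕ → ℤ) : sgn m n a = 1 ∨ sgn m n a = -1 := by
  unfold sgn; split_ifs <;> simp

lemma indep_pad {Ω : Type*} [MeasurableSpace Ω] (P : Measure Ω)
    (ξ : ℕ → Ω → ℤ) (hξm : ∀ k, Measurable (ξ k))
    (hindep : iIndepFun ξ P) (n : ℕ) :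
    IndepFun (fun ω => pad n (fun l => ξ l ω)) (ξ n) P := by
  have hdisj : Disjoint (Finset.range n) ({n} : Finset ℕ) := by
    simp only [Finset.disjoint_singleton_right, Finset.mem_range]
    omega
  have h := hindep.indepFun_finset (Finset.range n) {n} hdisj hξm
  set φ : ({x // x ∈ Finset.range n} → ℤ) → (ℕ → ℤ) :=
    fun g k => if h : k < n then g ⟨k, Finset.mem_range.mpr h⟩ else 0 with hφdef
  have hφm : Measurable φ := by
    refine measurable_pi_lambda _ fun k => ?_
    by_cases h : k < n
    · simpa [hφdef, h] using
        measurable_pi_apply (⟨k, Finset.mem_range.mpr h⟩ : {x // x ∈ Finset.range n})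
    · simpa [hφdef, h] using
        (measurable_const : Measurable fun _ : {x // x ∈ Finset.range n} → ℤ => (0 : ℤ))
  set ψ : ({x // x ∈ ({n} : Finset ℕ)} → ℤ) → ℤ :=
    fun g => g ⟨n, Finset.mem_singleton_self n⟩ with hψdef
  have hψm : Measurable ψ := measurable_pi_apply _
  have h2 := h.comp hφm hψm
  have e1 : (φ ∘ fun ω (i : {x // x ∈ Finset.range n}) => ξ i ω)
      = fun ω => pad n (fun l => ξ l ω) := by
    funext ω
    funext k
    by_cases h : k < n <;> simp [hφdef, Function.comp, pad, h]
  have e2 : (ψ ∘ fun ω (i : {x // x ∈ ({n} : Finset ℕ)}) => ξ i ω) = ξ n := by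
    funext ω; simp [hψdef, Function.comp]
  rwa [e1, e2] at h2

lemma law_pad {Ω : Type*} [MeasurableSpace Ω] (P : Measure Ω) [IsProbabilityMeasure P]
    (ξ : ℕ → Ω → ℤ) (hξm : ∀ k, Measurable (ξ k))
    (hindep : iIndepFun ξ P)
    (hsym : ∀ k, Measure.map (fun z : ℤ => -z) (Measure.map (ξ k) P) = Measure.map (ξ k) P)
    (m : ℤ) (n : ℕ) :
    Measure.map (fun ω => pad n (flipInf m (fun l => ξ l ω))) P
      = Measure.map (fun ω => pad n (fun l => ξ l ω)) P := by
  induction n with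
  | zero =>
    have h1 : (fun ω : Ω => pad 0 (flipInf m (fun l => ξ l ω)))
        = fun ω : Ω => pad 0 (fun l => ξ l ω) := by
      funext ω; funext k; simp [pad]
    rw [h1]
  | succ n ih =>
    have hvm : Measurable fun ω : Ω => (fun l => ξ l ω) := measurable_pi_lambda _ hξm
    have hXm : Measurable fun ω : Ω => pad n (fun l => ξ l ω) := (measurable_pad n).comp hvm
    have hindXY : IndepFun (fun ω : Ω => pad n (fun l => ξ l ω)) (ξ n) P :=
      indep_pad P ξ hξm hindep n
    have hpaircm : Measurable fun ω : Ω =>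
        ((pad n (fun l => ξ l ω), sgn m n (pad n (fun l => ξ l ω)) * ξ n ω) : (ℕ → ℤ) × ℤ) :=
      hXm.prodMk (((measurable_sgn m n).comp hXm).mul (hξm n))
    have hpairm : Measurable fun ω : Ω => ((pad n (fun l => ξ l ω), ξ n ω) : (ℕ → ℤ) × ℤ) :=
      hXm.prodMk (hξm n)
    have hstep1 : (fun ω : Ω => pad (n + 1) (flipInf m (fun l => ξ l ω)))
        = (Kmap n ∘ Prod.map (flipG m n) id) ∘
          (fun ω : Ω => (pad n (fun l => ξ l ω), sgn m n (pad n (fun l => ξ l ω)) * ξ n ω)) := by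
      funext ω
      exact pad_succ_flip m n (fun l => ξ l ω)
    have hstep2 : (fun ω : Ω => pad (n + 1) (fun l => ξ l ω))
        = Kmap n ∘ (fun ω : Ω => (pad n (fun l => ξ l ω), ξ n ω)) := by
      funext ω
      exact pad_succ n (fun l => ξ l ω)
    haveI : IsProbabilityMeasure (Measure.map (fun ω : Ω => pad n (fun l => ξ l ω)) P) :=
      Measure.isProbabilityMeasure_map hXm.aemeasurable
    haveI : IsProbabilityMeasure (Measure.map (ξ n) P) :=
      Measure.isProbabilityMeasure_map (hξm n).aemeasurable
    have hpairlaw : Measure.map (fun ω : Ω => ((pad n (fun l => ξ l ω), ξ n ω) : (ℕ → ℤ) × ℤ)) P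
        = (Measure.map (fun ω : Ω => pad n (fun l => ξ l ω)) P).prod (Measure.map (ξ n) P) :=
      (indepFun_iff_map_prod_eq_prod_map_map hXm.aemeasurable (hξm n).aemeasurable).mp hindXY
    have hGX : flipG m n ∘ (fun ω : Ω => pad n (fun l => ξ l ω))
        = fun ω : Ω => pad n (flipInf m (fun l => ξ l ω)) := by
      funext ω
      simp only [Function.comp_apply]
      exact flipG_pad m n (fun l => ξ l ω)
    rw [hstep1, hstep2,
      ← Measure.map_map (g := Kmap n ∘ Prod.map (flipG m n) id) (f := fun ω : Ω =>
        ((pad n (fun l => ξ l ω), sgn m n (pad n (fun l => ξ l ω)) * ξ n ω) : (ℕ → ℤ) × ℤ))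
        ((measurable_Kmap n).comp ((measurable_flipG m n).prodMap measurable_id)) hpaircm,
      flip_pair P (fun ω : Ω => pad n (fun l => ξ l ω)) (ξ n) hXm (hξm n) hindXY (hsym n)
        (sgn m n) (measurable_sgn m n) (sgn_pm m n),
      ← Measure.map_map (measurable_Kmap n) ((measurable_flipG m n).prodMap measurable_id),
      hpairlaw, ← Measure.map_prod_map _ _ (measurable_flipG m n) measurable_id,
      Measure.map_map (measurable_flipG m n) hXm, hGX, ih, Measure.map_id,
      ← hpairlaw, Measure.map_map (measurable_Kmap n) hpairm]

lemma ext_of_pad (μ ν : Measure (ℕ → ℤ)) [IsProbabilityMeasure μ] [IsProbabilityMeasure ν]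
    (h : ∀ n, μ.map (pad n) = ν.map (pad n)) : μ = ν := by
  refine ext_of_generate_finite (measurableCylinders (fun _ : ℕ => ℤ))
    (generateFrom_measurableCylinders (α := fun _ : ℕ => ℤ)).symm
    (isPiSystem_measurableCylinders (α := fun _ : ℕ => ℤ)) ?_ (by simp)
  intro s hs
  obtain ⟨I, t, ht, rfl⟩ := (mem_measurableCylinders s).mp hs
  set n := I.sup id + 1 with hn
  have hcyl : MeasurableSet (cylinder I t) := MeasurableSet.cylinder (α := fun _ : ℕ => ℤ) I ht
  have hpre : pad n ⁻¹' cylinder I t = cylinder I t := by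
    ext f
    simp only [Set.mem_preimage, mem_cylinder]
    have hres : I.restrict (pad n f) = I.restrict f := by
      funext i
      have hi : (i : ℕ) < n := Nat.lt_succ_of_le (Finset.le_sup (f := id) i.2)
      simp [Finset.restrict, pad, hi]
    rw [hres]
  rw [← hpre, ← Measure.map_apply (measurable_pad n) hcyl, h n,
    Measure.map_apply (measurable_pad n) hcyl]

end ReflectionCouplingAux

open ReflectionCouplingAux

/-- Reflection coupling: if `S̄` is a simple symmetric random walk started at `0`, `x` is an even
integer, and `S̄^x` is obtained by reflecting (`S̄^x_i = x - S̄_i`) until the first time `S̄`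
hits `x/2` and following `S̄` afterwards, then `S̄^x` is a simple symmetric random walk started
at `x`, and `|S̄^x_i| ≥ |S̄_i|` for all `i`. -/
theorem reflection_coupling_domination
    {Ω : Type*} [MeasurableSpace Ω] (P : Measure Ω) [IsProbabilityMeasure P]
    (ξ : ℕ → Ω → ℤ)
    (hξm : ∀ k, Measurable (ξ k))
    (hindep : iIndepFun ξ P)
    (hdist : ∀ k, Measure.map (ξ k) P
      = (1/2 : ℝ≥0∞) • Measure.dirac (1 : ℤ) + (1/2 : ℝ≥0∞) • Measure.dirac (-1 : ℤ))
    (S : ℕ → Ω → ℤ) (hS : ∀ i ω, S i ω = ∑ k ∈ Finset.range i, ξ k ω)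
    (x : ℤ) (hx : Even x)
    (Sx : ℕ → Ω → ℤ)
    (hSx : ∀ i ω, Sx i ω = if ∀ k ≤ i, S k ω ≠ x / 2 then x - S i ω else S i ω) :
    Measure.map (fun ω => fun i => Sx i ω) P
      = Measure.map (fun ω => fun i => x + S i ω) P ∧
    ∀ᵐ ω ∂P, ∀ i, |S i ω| ≤ |Sx i ω| := by
  have hx2 : 2 * (x / 2) = x := Int.two_mul_ediv_two_of_even hx
  set m : ℤ := x / 2 with hmdef
  have hvm : Measurable fun ω : Ω => (fun l => ξ l ω) := measurable_pi_lambda _ hξm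
  constructor
  · -- equality in distribution
    have hkey : (fun ω : Ω => fun i => Sx i ω)
        = (fun a : ℕ → ℤ => fun i => x + ps a i) ∘ flipInf m ∘ (fun ω l => ξ l ω) := by
      funext ω
      funext i
      simp only [Function.comp_apply]
      have hps : ∀ j, ps (fun l => ξ l ω) j = S j ω := fun j => (hS j ω).symm
      have h := ps_flipInf m (fun l => ξ l ω) i
      rw [hSx]
      have hcond : (∀ k ≤ i, S k ω ≠ m) ↔ nohit m (fun l => ξ l ω) i := by
        unfold nohit
        exact forall₂_congr fun j hj => by rw [hps j]
      by_cases hc : nohit m (fun l => ξ l ω) i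
      · rw [if_pos (hcond.mpr hc)]
        rw [if_pos hc] at h
        have hpi := hps i
        omega
      · rw [if_neg (fun hh => hc (hcond.mp hh))]
        rw [if_neg hc] at h
        have hpi := hps i
        omega
    have hkey2 : (fun ω : Ω => fun i => x + S i ω)
        = (fun a : ℕ → ℤ => fun i => x + ps a i) ∘ (fun ω l => ξ l ω) := by
      funext ω
      funext i
      simp only [Function.comp_apply]
      rw [hS i ω]
      rfl
    have hlaw : Measure.map (flipInf m ∘ (fun ω : Ω => fun l => ξ l ω)) P
        = Measure.map (fun ω : Ω => fun l => ξ l ω) P := by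
      haveI : IsProbabilityMeasure
          (Measure.map (flipInf m ∘ (fun ω : Ω => fun l => ξ l ω)) P) :=
        Measure.isProbabilityMeasure_map ((measurable_flipInf m).comp hvm).aemeasurable
      haveI : IsProbabilityMeasure (Measure.map (fun ω : Ω => fun l => ξ l ω) P) :=
        Measure.isProbabilityMeasure_map hvm.aemeasurable
      refine ext_of_pad _ _ fun n => ?_
      rw [Measure.map_map (measurable_pad n) ((measurable_flipInf m).comp hvm),
        Measure.map_map (measurable_pad n) hvm]
      exact law_pad P ξ hξm hindep (fun k => sym_law P (ξ k) (hdist k)) m n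
    have hF : Measurable fun a : ℕ → ℤ => fun i => x + ps a i :=
      measurable_pi_lambda _ fun i => measurable_const.add (measurable_ps i)
    rw [hkey, hkey2, ← Measure.map_map hF ((measurable_flipInf m).comp hvm),
      ← Measure.map_map hF hvm, hlaw]
  · -- pathwise domination
    have hae : ∀ᵐ ω ∂P, ∀ k, ξ k ω = 1 ∨ ξ k ω = -1 :=
      ae_all_iff.mpr fun k => steps_ae P (ξ k) (hξm k) (hdist k)
    filter_upwards [hae] with ω hω i
    rw [hSx]
    by_cases h : ∀ k ≤ i, S k ω ≠ m
    · rw [if_pos h]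
      have hn : nohit m (fun l => ξ l ω) i := by
        intro j hj
        rw [show ps (fun l => ξ l ω) j = S j ω from (hS j ω).symm]
        exact h j hj
      have hst := stay_side m (fun l => ξ l ω) hω i hn
      rw [show ps (fun l => ξ l ω) i = S i ω from (hS i ω).symm, hx2] at hst
      exact hst
    · rw [if_neg h]
end

section
/- For the integral ∫_0^∞ ln(1 + 8t/(1+y²)) dy with t > -1/8, the value equals π(√(1+8t) - 1). -/
open Real MeasureTheory Filter Topology Set

lemma abs_log_sub_log_le {x z : ℝ} (hx : 0 < x) (hz : 0 < z) :
    |Real.log x - Real.log z| ≤ |x - z| / min x z := by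
  rcases le_total x z with h | h
  · rw [min_eq_left h, abs_sub_comm x z,
      abs_of_nonpos (by have := Real.log_le_log hx h; linarith),
      abs_of_nonneg (by linarith : (0:ℝ) ≤ z - x)]
    have h1 : Real.log (z / x) ≤ z / x - 1 := Real.log_le_sub_one_of_pos (by positivity)
    rw [Real.log_div hz.ne' hx.ne'] at h1
    have h2 : z / x - 1 = (z - x) / x := by field_simp
    linarith [h2 ▸ h1]
  · rw [min_eq_right h, abs_of_nonneg (by
      have := Real.log_le_log hz h; linarith), abs_of_nonneg (by linarith)]
    have h1 : Real.log (x / z) ≤ x / z - 1 := Real.log_le_sub_one_of_pos (by positivity)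
    rw [Real.log_div hx.ne' hz.ne'] at h1
    have : x / z - 1 = (x - z) / z := by field_simp
    linarith [this ▸ h1]

/-- `∫_0^∞ [ln(1+8t+y²) - ln(1+y²)] dy = π(√(1+8t) - 1)` for `t > -1/8`. -/
theorem integral_log_ratio (t : ℝ) (ht : -1/8 < t) :
    ∫ y in Set.Ioi (0 : ℝ), (Real.log (1 + 8*t + y^2) - Real.log (1 + y^2))
      = Real.pi * (Real.sqrt (1 + 8*t) - 1) := by
  have h8 : (0:ℝ) < 1 + 8*t := by linarith
  set a := Real.sqrt (1 + 8*t) with ha_def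
  have ha : 0 < a := Real.sqrt_pos.mpr h8
  have ha2 : a^2 = 1 + 8*t := Real.sq_sqrt h8.le
  set m := min (a^2) 1 with hm_def
  have hm : 0 < m := lt_min (by positivity) one_pos
  have hm1 : m ≤ 1 := min_le_right _ _
  set C := |a^2 - 1| / m with hC_def
  have hC : 0 ≤ C := div_nonneg (abs_nonneg _) hm.le
  -- pointwise bound on the integrand
  have key : ∀ y : ℝ, |Real.log (a^2 + y^2) - Real.log (1 + y^2)| ≤ C / (1 + y^2) := by
    intro y
    have hy2 : (0:ℝ) ≤ y^2 := sq_nonneg y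
    have hx : (0:ℝ) < a^2 + y^2 := by positivity
    have hz : (0:ℝ) < 1 + y^2 := by positivity
    have h1 := abs_log_sub_log_le hx hz
    have hmin : min (a^2 + y^2) (1 + y^2) = m + y^2 := min_add_add_right _ _ _
    rw [hmin] at h1
    have h2 : |a^2 + y^2 - (1 + y^2)| = |a^2 - 1| := by ring_nf
    rw [h2] at h1
    have h3 : |a^2 - 1| / (m + y^2) ≤ C / (1 + y^2) := by
      rw [hC_def, div_le_div_iff₀ (by positivity) (by positivity)]
      have hmc : |a^2-1| / m * m = |a^2-1| := div_mul_cancel₀ _ hm.ne'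
      have hDm : |a^2-1| ≤ |a^2-1| / m := by
        rw [le_div_iff₀ hm]; nlinarith [abs_nonneg (a^2-1)]
      nlinarith [abs_nonneg (a^2-1), mul_le_mul_of_nonneg_right hDm hy2]
    linarith
  -- the integrand
  have hrw : ∀ y : ℝ, 1 + 8*t + y^2 = a^2 + y^2 := fun y => by rw [ha2]
  have hcont : Continuous fun y : ℝ => Real.log (a^2 + y^2) - Real.log (1 + y^2) := by
    apply Continuous.sub
    · exact (continuous_const.add (continuous_pow 2)).log
        (fun y => (by positivity : (0:ℝ) < a^2 + y^2).ne')
    · exact (continuous_const.add (continuous_pow 2)).log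
        (fun y => (by positivity : (0:ℝ) < 1 + y^2).ne')
  have hint : IntegrableOn (fun y : ℝ => Real.log (a^2 + y^2) - Real.log (1 + y^2))
      (Set.Ioi (0:ℝ)) := by
    apply Integrable.mono' ((integrable_inv_one_add_sq.const_mul C).integrableOn)
    · exact hcont.aestronglyMeasurable.restrict
    · filter_upwards with y
      have := key y
      rw [Real.norm_eq_abs]
      calc |Real.log (a^2 + y^2) - Real.log (1 + y^2)| ≤ C / (1 + y^2) := this
        _ = C * (1 + y^2)⁻¹ := by ring
  -- antiderivative
  set F : ℝ → ℝ := fun y =>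
    y * (Real.log (a^2 + y^2) - Real.log (1 + y^2)) + 2*a*Real.arctan (y/a)
      - 2*Real.arctan y with hF_def
  have hderiv : ∀ y ∈ Set.Ici (0:ℝ),
      HasDerivAt F (Real.log (a^2 + y^2) - Real.log (1 + y^2)) y := by
    intro y _
    have hy2 : (0:ℝ) ≤ y^2 := sq_nonneg y
    have hx : (0:ℝ) < a^2 + y^2 := by positivity
    have hz : (0:ℝ) < 1 + y^2 := by positivity
    have h1 : HasDerivAt (fun y : ℝ => a^2 + y^2) (2*y) y := by
      simpa using (hasDerivAt_pow 2 y).const_add (a^2)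
    have h2 : HasDerivAt (fun y : ℝ => 1 + y^2) (2*y) y := by
      simpa using (hasDerivAt_pow 2 y).const_add (1:ℝ)
    have hl1 : HasDerivAt (fun y : ℝ => Real.log (a^2 + y^2)) (2*y/(a^2+y^2)) y :=
      h1.log hx.ne'
    have hl2 : HasDerivAt (fun y : ℝ => Real.log (1 + y^2)) (2*y/(1+y^2)) y :=
      h2.log hz.ne'
    have hmul : HasDerivAt
        (fun y : ℝ => y * (Real.log (a^2 + y^2) - Real.log (1 + y^2)))
        (1 * (Real.log (a^2 + y^2) - Real.log (1 + y^2))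
          + y * (2*y/(a^2+y^2) - 2*y/(1+y^2))) y :=
      (hasDerivAt_id y).mul (hl1.sub hl2)
    have harc1 : HasDerivAt (fun y : ℝ => 2*a*Real.arctan (y/a))
        (2*a*((1/(1+(y/a)^2)) * (1/a))) y := by
      have h := ((Real.hasDerivAt_arctan (y/a)).comp y
        ((hasDerivAt_id y).div_const a)).const_mul (2*a)
      convert h using 2
      · rfl
      · rfl
      · simp [Function.comp]
    have harc2 : HasDerivAt (fun y : ℝ => 2*Real.arctan y) (2*(1/(1+y^2))) y :=
      (Real.hasDerivAt_arctan y).const_mul 2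
    have := (hmul.add harc1).sub harc2
    convert this using 1
    · rfl
    · rfl
    · rfl
    have hya : 1 + (y/a)^2 = (a^2+y^2)/a^2 := by field_simp
    rw [hya]
    field_simp
    ring
  -- limit at infinity
  have hlim : Tendsto F atTop (𝓝 (Real.pi * a - Real.pi)) := by
    have t1 : Tendsto (fun y : ℝ => y * (Real.log (a^2 + y^2) - Real.log (1 + y^2)))
        atTop (𝓝 0) := by
      have hb : Tendsto (fun y : ℝ => C * y⁻¹) atTop (𝓝 (C * 0)) :=
        tendsto_inv_atTop_zero.const_mul C
      rw [mul_zero] at hb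
      apply squeeze_zero_norm' _ hb
      filter_upwards [eventually_ge_atTop (1:ℝ)] with y hy
      have hy0 : (0:ℝ) < y := by linarith
      rw [norm_mul, Real.norm_eq_abs, Real.norm_eq_abs, abs_of_pos hy0]
      calc y * |Real.log (a^2 + y^2) - Real.log (1 + y^2)|
          ≤ y * (C / (1 + y^2)) := by
            exact mul_le_mul_of_nonneg_left (key y) hy0.le
        _ ≤ C * y⁻¹ := by
            have heq : y * (C / (1 + y^2)) = C * y / (1 + y^2) := by ring
            rw [heq, div_le_iff₀ (by positivity)]
            have hi : (0:ℝ) ≤ y⁻¹ := by positivity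
            have hyy : C * (y⁻¹ * y^2) = C * y := by
              have : y⁻¹ * y^2 = y := by field_simp
              rw [this]
            nlinarith [mul_nonneg hC hi, hyy]
    have t2 : Tendsto (fun y : ℝ => 2*a*Real.arctan (y/a)) atTop
        (𝓝 (2*a*(Real.pi/2))) := by
      have h1 : Tendsto (fun y : ℝ => y/a) atTop atTop :=
        tendsto_id.atTop_div_const ha
      exact ((Real.tendsto_arctan_atTop.mono_right nhdsWithin_le_nhds).comp h1).const_mul _
    have t3 : Tendsto (fun y : ℝ => 2*Real.arctan y) atTop (𝓝 (2*(Real.pi/2))) :=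
      (Real.tendsto_arctan_atTop.mono_right nhdsWithin_le_nhds).const_mul 2
    have := (t1.add t2).sub t3
    convert this using 1
    ring
  have hFTC := integral_Ioi_of_hasDerivAt_of_tendsto' hderiv hint hlim
  have hF0 : F 0 = 0 := by
    simp [hF_def, Real.arctan_zero]
  rw [hF0, sub_zero] at hFTC
  calc ∫ y in Set.Ioi (0 : ℝ), (Real.log (1 + 8*t + y^2) - Real.log (1 + y^2))
      = ∫ y in Set.Ioi (0 : ℝ), (Real.log (a^2 + y^2) - Real.log (1 + y^2)) := by
        simp_rw [hrw]
    _ = Real.pi * a - Real.pi := hFTC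
    _ = Real.pi * (a - 1) := by ring
end

section
/- If L''_n denotes the sum Σ_{i=A+1}^n (S_i - S_A)²/i² for a simple symmetric random walk S, then L''_n is stochastically smaller than L'_n = Σ_{i=A+1}^n S_i²/i²: for every y ≥ 0, P(L'_n ≤ y) ≤ P(L''_n ≤ y). -/
open MeasureTheory ProbabilityTheory
open scoped ENNReal

namespace LppAux

/-- partial sum of a sequence -/
def psum (s : ℕ → ℤ) (i : ℕ) : ℤ := ∑ k ∈ Finset.range i, s k

/-- `Dsum A s i = ∑_{A ≤ j < i}` of the sign-flipped sequence. -/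
def Dsum (A : ℕ) (s : ℕ → ℤ) : ℕ → ℤ
  | 0 => 0
  | k + 1 => if k < A then 0 else
      Dsum A s k + (if psum s k * Dsum A s k < 0 then -1 else 1) * s k

/-- the sign-flipped sequence -/
def Tmap (A : ℕ) (s : ℕ → ℤ) (k : ℕ) : ℤ :=
  if k < A then s k else (if psum s k * Dsum A s k < 0 then -1 else 1) * s k

lemma psum_succ (s : ℕ → ℤ) (k : ℕ) : psum s (k + 1) = psum s k + s k :=
  Finset.sum_range_succ _ _

lemma Dsum_of_le (A : ℕ) (s : ℕ → ℤ) : ∀ k, k ≤ A → Dsum A s k = 0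
  | 0, _ => rfl
  | k + 1, h => by simp [Dsum, Nat.lt_of_succ_le h]

lemma Dsum_succ (A : ℕ) (s : ℕ → ℤ) {k : ℕ} (h : A ≤ k) :
    Dsum A s (k + 1) = Dsum A s k + (if psum s k * Dsum A s k < 0 then -1 else 1) * s k := by
  simp [Dsum, Nat.not_lt.mpr h]

lemma Dsum_eq_sum_Tmap (A : ℕ) (s : ℕ → ℤ) : ∀ i,
    Dsum A s i = ∑ j ∈ Finset.Ico A i, Tmap A s j
  | 0 => by simp [Dsum]
  | i + 1 => by
    by_cases h : i < A
    · rw [Dsum_of_le A s _ h, Finset.Ico_eq_empty (by omega)]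
      simp
    · push_neg at h
      rw [Dsum_succ A s h, Finset.sum_Ico_succ_top h, ← Dsum_eq_sum_Tmap A s i,
        Tmap, if_neg (Nat.not_lt.mpr h)]

lemma psum_congr {s u : ℕ → ℤ} {k : ℕ} (h : ∀ j, j < k → s j = u j) :
    psum s k = psum u k :=
  Finset.sum_congr rfl fun j hj => h j (Finset.mem_range.mp hj)

lemma Dsum_congr (A : ℕ) {s u : ℕ → ℤ} : ∀ k, (∀ j, j < k → s j = u j) →
    Dsum A s k = Dsum A u k
  | 0, _ => rfl
  | k + 1, h => by
    have h1 : Dsum A s k = Dsum A u k := Dsum_congr A k fun j hj => h j (by omega)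
    have h2 : psum s k = psum u k := psum_congr fun j hj => h j (by omega)
    simp only [Dsum, h1, h2, h k (by omega)]

/-- parity of partial sums of ±1 sequences -/
lemma psum_parity {s : ℕ → ℤ} (hs : ∀ k, s k = 1 ∨ s k = -1) :
    ∀ m, Even (psum s m - m)
  | 0 => by simp [psum]
  | m + 1 => by
    have ih := psum_parity hs m
    rw [psum_succ]
    rcases ih with ⟨c, hc⟩
    rcases hs m with h | h
    · exact ⟨c, by push_cast [h]; push_cast at hc; linarith⟩
    · exact ⟨c - 1, by push_cast [h]; push_cast at hc; linarith⟩

/-- key invariant: the flipped walk stays (weakly) below the original in absolute value -/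
lemma key (A : ℕ) (hAe : Even A) {s : ℕ → ℤ} (hs : ∀ k, s k = 1 ∨ s k = -1) :
    ∀ i, A ≤ i → |Dsum A s i| ≤ |psum s i| ∧ Even (psum s i - Dsum A s i) := by
  intro i hi
  induction i, hi using Nat.le_induction with
  | base =>
    rw [Dsum_of_le A s A le_rfl]
    refine ⟨by simp [abs_nonneg], ?_⟩
    have h1 := psum_parity hs A
    rcases h1 with ⟨c, hc⟩
    rcases hAe with ⟨a, ha⟩
    exact ⟨c + a, by push_cast at hc ⊢; omega⟩
  | succ i hi ih =>
    obtain ⟨hle, hev⟩ := ih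
    set S := psum s i with hSdef
    set D := Dsum A s i with hDdef
    set σ : ℤ := if S * D < 0 then -1 else 1 with hσdef
    have hσ : σ = 1 ∨ σ = -1 := by
      by_cases h : S * D < 0 <;> simp [hσdef, h]
    have hDsucc : Dsum A s (i + 1) = D + σ * s i := Dsum_succ A s hi
    have hSsucc : psum s (i + 1) = S + s i := psum_succ s i
    have hsi := hs i
    have habs_si : |s i| = 1 := by rcases hsi with h | h <;> simp [h]
    have habs_σ : |σ| = 1 := by rcases hσ with h | h <;> simp [h]
    constructor
    · rw [hDsucc, hSsucc]
      by_cases h1 : |D| = |S|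
      · rcases abs_eq_abs.mp h1 with hds | hds
        · -- D = S
          have hσ1 : σ = 1 := by
            rw [hσdef, if_neg]
            rw [hds]
            exact not_lt.mpr (mul_self_nonneg S)
          rw [hds, hσ1, one_mul]
        · -- D = -S
          by_cases hS0 : S = 0
          · have hD0 : D = 0 := by rw [hds, hS0, neg_zero]
            have hσ1 : σ = 1 := by
              rw [hσdef, if_neg]; rw [hD0]; simp
            rw [hD0, hσ1, one_mul, hS0]
          · have hσ1 : σ = -1 := by
              rw [hσdef, if_pos]
              rw [hds]
              have hps : 0 < S * S := mul_self_pos.mpr hS0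
              nlinarith
            have : D + σ * s i = -(S + s i) := by rw [hds, hσ1]; ring
            rw [this, abs_neg]
      · -- |D| < |S|
        have hlt : |D| < |S| := lt_of_le_of_ne hle h1
        have hevabs : Even (|S| - |D|) := by
          have hSD' : Even (S + D) := by
            rcases hev with ⟨c, hc⟩; exact ⟨c + D, by linarith⟩
          rcases abs_choice S with hcS | hcS <;> rcases abs_choice D with hcD | hcD <;>
            rw [hcS, hcD]
          · rcases hev with ⟨c, hc⟩; exact ⟨c, by linarith⟩
          · rcases hSD' with ⟨c, hc⟩; exact ⟨c, by linarith⟩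
          · rcases hSD' with ⟨c, hc⟩; exact ⟨-c, by linarith⟩
          · rcases hev with ⟨c, hc⟩; exact ⟨-c, by linarith⟩
        have h2 : |D| + 2 ≤ |S| := by
          rcases hevabs with ⟨c, hc⟩; omega
        have hb1 : |D + σ * s i| ≤ |D| + 1 := by
          calc |D + σ * s i| ≤ |D| + |σ * s i| := abs_add_le _ _
          _ = |D| + 1 := by rw [abs_mul, habs_σ, habs_si, one_mul]
        have hb2 : |S| - 1 ≤ |S + s i| := by
          have : |S| ≤ |S + s i| + |s i| := by
            calc |S| = |(S + s i) + (-s i)| := by ring_nf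
            _ ≤ |S + s i| + |(-s i)| := abs_add_le _ _
            _ = |S + s i| + |s i| := by rw [abs_neg]
          omega
        omega
    · rw [hDsucc, hSsucc]
      rcases hσ with h | h
      · rw [h, one_mul]
        rcases hev with ⟨c, hc⟩; exact ⟨c, by linarith⟩
      · rw [h]
        rcases hev with ⟨c, hc⟩; exact ⟨c + s i, by linarith⟩

lemma Tmap_pm {A : ℕ} {s : ℕ → ℤ} (hs : ∀ k, s k = 1 ∨ s k = -1) (k : ℕ) :
    Tmap A s k = 1 ∨ Tmap A s k = -1 := by
  unfold Tmap
  rcases hs k with h | h <;>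
    by_cases h1 : k < A <;> by_cases h2 : psum s k * Dsum A s k < 0 <;>
      simp [h, h1, h2]

lemma Tmap_inj {A : ℕ} {s u : ℕ → ℤ} {n : ℕ}
    (h : ∀ j, j < n → Tmap A s j = Tmap A u j) : ∀ j, j < n → s j = u j := by
  intro j hj
  induction j using Nat.strong_induction_on with
  | _ j ih =>
  have hTj := h j hj
  by_cases hjA : j < A
  · rwa [Tmap, if_pos hjA, Tmap, if_pos hjA] at hTj
  · have hps : psum s j = psum u j := psum_congr fun j' hj' => ih j' hj' (by omega)
    have hds : Dsum A s j = Dsum A u j := Dsum_congr A j fun j' hj' => ih j' hj' (by omega)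
    rw [Tmap, if_neg hjA, Tmap, if_neg hjA, hps, hds] at hTj
    set σ : ℤ := if psum u j * Dsum A u j < 0 then -1 else 1 with hσdef
    have hσ : σ ≠ 0 := by by_cases hh : psum u j * Dsum A u j < 0 <;> simp [hσdef, hh]
    exact mul_left_cancel₀ hσ hTj

end LppAux

section
open LppAux

/-- For a simple symmetric random walk, `L''_n = ∑_{i=A+1}^n (S_i - S_A)²/i²` is stochastically
smaller than `L'_n = ∑_{i=A+1}^n S_i²/i²`: for every `y ≥ 0`,
`P(L'_n ≤ y) ≤ P(L''_n ≤ y)`. -/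
theorem L_doubleprime_stochastically_smaller
    {Ω : Type*} [MeasurableSpace Ω] (P : Measure Ω) [IsProbabilityMeasure P]
    (ξ : ℕ → Ω → ℤ)
    (hξm : ∀ k, Measurable (ξ k))
    (hindep : iIndepFun ξ P)
    (hdist : ∀ k, Measure.map (ξ k) P
      = (1/2 : ℝ≥0∞) • Measure.dirac (1 : ℤ) + (1/2 : ℝ≥0∞) • Measure.dirac (-1 : ℤ))
    (S : ℕ → Ω → ℤ) (hS : ∀ i ω, S i ω = ∑ k ∈ Finset.range i, ξ k ω)
    (A n : ℕ) (hA : 0 < A) (hAn : A < n) (hAeven : Even A)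
    (L' L'' : Ω → ℝ)
    (hL' : ∀ ω, L' ω = ∑ i ∈ Finset.Ioc A n, ((S i ω : ℝ)) ^ 2 / (i : ℝ) ^ 2)
    (hL'' : ∀ ω, L'' ω = ∑ i ∈ Finset.Ioc A n, ((S i ω - S A ω : ℤ) : ℝ) ^ 2 / (i : ℝ) ^ 2) :
    ∀ y : ℝ, 0 ≤ y → P {ω | L' ω ≤ y} ≤ P {ω | L'' ω ≤ y} := by
  intro y _
  classical
  -- extension of a finite tuple to a sequence
  set ext : (Fin n → ℤ) → ℕ → ℤ := fun s j => if h : j < n then s ⟨j, h⟩ else 1 with hext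
  set F : Finset (Fin n → ℤ) := Fintype.piFinset fun _ : Fin n => ({1, -1} : Finset ℤ) with hF
  set C : (Fin n → ℤ) → Set Ω := fun s => ⋂ k ∈ Finset.range n, ξ k ⁻¹' {ext s k} with hC
  set f' : (Fin n → ℤ) → ℝ :=
    fun s => ∑ i ∈ Finset.Ioc A n, ((psum (ext s) i : ℝ)) ^ 2 / (i : ℝ) ^ 2 with hf'
  set f'' : (Fin n → ℤ) → ℝ :=
    fun s => ∑ i ∈ Finset.Ioc A n,
      ((psum (ext s) i - psum (ext s) A : ℤ) : ℝ) ^ 2 / (i : ℝ) ^ 2 with hf''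
  have hCmeas : ∀ s, MeasurableSet (C s) := fun s =>
    Finset.measurableSet_biInter _ fun k _ => (hξm k) (measurableSet_singleton _)
  -- single-coordinate probabilities
  have hhalf : ∀ (k : ℕ) (c : ℤ), c = 1 ∨ c = -1 → P (ξ k ⁻¹' {c}) = 1/2 := by
    intro k c hc
    rw [← Measure.map_apply (hξm k) (measurableSet_singleton c), hdist k]
    rcases hc with h | h <;> subst h <;>
      simp [Measure.dirac_apply'] <;> norm_num
  have hPC : ∀ s ∈ F, P (C s) = (1/2 : ℝ≥0∞) ^ n := by
    intro s hsF
    have hsv : ∀ k, k < n → ext s k = 1 ∨ ext s k = -1 := by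
      intro k hk
      have := (Fintype.mem_piFinset.mp hsF) ⟨k, hk⟩
      simp only [Finset.mem_insert, Finset.mem_singleton] at this
      simpa [hext, hk] using this
    rw [hC]
    rw [hindep.measure_inter_preimage_eq_mul (Finset.range n)
      (sets := fun k => ({ext s k} : Set ℤ)) (fun k _ => measurableSet_singleton _)]
    rw [Finset.prod_congr rfl fun k hk => hhalf k _ (hsv k (Finset.mem_range.mp hk))]
    simp
  -- on C s, the walk is determined
  have hSdet : ∀ s, ∀ ω ∈ C s, ∀ i, i ≤ n → S i ω = psum (ext s) i := by
    intro s ω hω i hi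
    rw [hS, psum]
    refine Finset.sum_congr rfl fun k hk => ?_
    have hk' : k < n := lt_of_lt_of_le (Finset.mem_range.mp hk) hi
    have := Set.mem_iInter₂.mp hω k (Finset.mem_range.mpr hk')
    exact this
  have hL'det : ∀ s, ∀ ω ∈ C s, L' ω = f' s := by
    intro s ω hω
    rw [hL', hf']
    refine Finset.sum_congr rfl fun i hi => ?_
    rw [hSdet s ω hω i (Finset.mem_Ioc.mp hi).2]
  have hL''det : ∀ s, ∀ ω ∈ C s, L'' ω = f'' s := by
    intro s ω hω
    rw [hL'', hf'']
    refine Finset.sum_congr rfl fun i hi => ?_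
    rw [hSdet s ω hω i (Finset.mem_Ioc.mp hi).2,
      hSdet s ω hω A (le_of_lt hAn)]
  -- null set where some increment is not ±1
  set N : Set Ω := ⋃ k ∈ Finset.range n, ξ k ⁻¹' ({1, -1} : Set ℤ)ᶜ with hN
  have hNnull : P N = 0 := by
    have hms : MeasurableSet (({1, -1} : Set ℤ)ᶜ) :=
      ((measurableSet_singleton 1).union (measurableSet_singleton (-1))).compl
    have h2 : ∀ k : ℕ, P (ξ k ⁻¹' ({1, -1} : Set ℤ)ᶜ) = 0 := by
      intro k
      rw [← Measure.map_apply (hξm k) hms, hdist k]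
      simp [Measure.dirac_apply']
    have h1 := measure_biUnion_finset_le (μ := P) (Finset.range n)
      (fun k => ξ k ⁻¹' ({1, -1} : Set ℤ)ᶜ)
    rw [hN]
    simp only [h2, Finset.sum_const_zero] at h1
    exact le_antisymm h1 zero_le
  set G' : Finset (Fin n → ℤ) := F.filter fun s => f' s ≤ y with hG'
  set G'' : Finset (Fin n → ℤ) := F.filter fun s => f'' s ≤ y with hG''
  -- disjointness of cylinders
  have hdisj : ∀ s u : Fin n → ℤ, s ≠ u → Disjoint (C s) (C u) := by
    intro s u hsu
    rw [Set.disjoint_left]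
    intro ω hωs hωu
    apply hsu
    funext k
    have h1 := Set.mem_iInter₂.mp hωs k.1 (Finset.mem_range.mpr k.2)
    have h2 := Set.mem_iInter₂.mp hωu k.1 (Finset.mem_range.mpr k.2)
    have e1 : ξ k.1 ω = ext s k.1 := h1
    have e2 : ξ k.1 ω = ext u k.1 := h2
    rw [e1] at e2
    simpa [hext, k.2] using e2
  -- upper bound for P{L' ≤ y}
  have hsub1 : {ω | L' ω ≤ y} ⊆ N ∪ ⋃ s ∈ G', C s := by
    intro ω hω
    by_cases hωN : ω ∈ N
    · exact Or.inl hωN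
    · right
      have hval : ∀ k, k < n → ξ k ω = 1 ∨ ξ k ω = -1 := by
        intro k hk
        by_contra hcon
        push_neg at hcon
        exact hωN (Set.mem_biUnion (Finset.mem_range.mpr hk)
          (by simp [hcon.1, hcon.2]))
      set s : Fin n → ℤ := fun k => ξ k ω with hs
      have hωC : ω ∈ C s := by
        rw [hC]
        refine Set.mem_iInter₂.mpr fun k hk => ?_
        have hk' : k < n := Finset.mem_range.mp hk
        simp [hext, hs, hk']
      have hsF : s ∈ F := by
        refine Fintype.mem_piFinset.mpr fun k => ?_
        rcases hval k.1 k.2 with h | h <;> simp [hs, h]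
      have hsG : s ∈ G' := Finset.mem_filter.mpr
        ⟨hsF, by rw [← hL'det s ω hωC]; exact hω⟩
      exact Set.mem_biUnion hsG hωC
  have hub : P {ω | L' ω ≤ y} ≤ (G'.card : ℝ≥0∞) * (1/2) ^ n := by
    calc P {ω | L' ω ≤ y} ≤ P (N ∪ ⋃ s ∈ G', C s) := measure_mono hsub1
    _ ≤ P N + P (⋃ s ∈ G', C s) := measure_union_le _ _
    _ = P (⋃ s ∈ G', C s) := by rw [hNnull, zero_add]
    _ = ∑ s ∈ G', P (C s) := measure_biUnion_finset
        (fun s hs u hu hsu => hdisj s u hsu) (fun s _ => hCmeas s)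
    _ = ∑ s ∈ G', (1/2 : ℝ≥0∞) ^ n := Finset.sum_congr rfl fun s hs =>
        hPC s (Finset.mem_filter.mp hs).1
    _ = (G'.card : ℝ≥0∞) * (1/2) ^ n := by
        rw [Finset.sum_const, nsmul_eq_mul]
  -- lower bound for P{L'' ≤ y}
  have hlb : (G''.card : ℝ≥0∞) * (1/2) ^ n ≤ P {ω | L'' ω ≤ y} := by
    have hsub2 : (⋃ s ∈ G'', C s) ⊆ {ω | L'' ω ≤ y} := by
      intro ω hω
      obtain ⟨s, hsG, hωC⟩ := Set.mem_iUnion₂.mp hω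
      have := (Finset.mem_filter.mp hsG).2
      exact le_trans (le_of_eq (hL''det s ω hωC)) this
    calc (G''.card : ℝ≥0∞) * (1/2) ^ n
        = ∑ s ∈ G'', (1/2 : ℝ≥0∞) ^ n := by rw [Finset.sum_const, nsmul_eq_mul]
    _ = ∑ s ∈ G'', P (C s) := Finset.sum_congr rfl fun s hs =>
        (hPC s (Finset.mem_filter.mp hs).1).symm
    _ = P (⋃ s ∈ G'', C s) := (measure_biUnion_finset
        (fun s hs u hu hsu => hdisj s u hsu) (fun s _ => hCmeas s)).symm
    _ ≤ P {ω | L'' ω ≤ y} := measure_mono hsub2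
  -- counting: injection via the predictable sign flip
  have hcard : G'.card ≤ G''.card := by
    set T : (Fin n → ℤ) → (Fin n → ℤ) := fun s k => Tmap A (ext s) k.1 with hT
    refine Finset.card_le_card_of_injOn T ?_ ?_
    · -- maps G' into G''
      intro s hsG
      obtain ⟨hsF, hfy⟩ := Finset.mem_filter.mp hsG
      have hsv : ∀ k, ext s k = 1 ∨ ext s k = -1 := by
        intro k
        by_cases hk : k < n
        · have := (Fintype.mem_piFinset.mp hsF) ⟨k, hk⟩
          simp only [Finset.mem_insert, Finset.mem_singleton] at this
          simpa [hext, hk] using this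
        · left; simp [hext, hk]
      have hTF : T s ∈ F := by
        refine Fintype.mem_piFinset.mpr fun k => ?_
        rcases Tmap_pm (A := A) hsv k.1 with h | h <;> simp [hT, h]
      have hextT : ∀ j, j < n → ext (T s) j = Tmap A (ext s) j := by
        intro j hj
        simp [hext, hT, hj]
      have hfy'' : f'' (T s) ≤ y := by
        refine le_trans ?_ hfy
        simp only [hf'', hf']
        refine Finset.sum_le_sum fun i hi => ?_
        obtain ⟨hAi, hin⟩ := Finset.mem_Ioc.mp hi
        have hAle : A ≤ i := le_of_lt hAi
        have hps : psum (ext (T s)) i - psum (ext (T s)) A = Dsum A (ext s) i := by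
          rw [Dsum_eq_sum_Tmap, psum, psum, ← Finset.sum_Ico_eq_sub _ hAle]
          exact Finset.sum_congr rfl fun j hj =>
            hextT j (lt_of_lt_of_le (Finset.mem_Ico.mp hj).2 hin)
        rw [hps]
        have hkey := (key A hAeven hsv i hAle).1
        have hsq : (Dsum A (ext s) i) ^ 2 ≤ (psum (ext s) i) ^ 2 := by
          have h1 := pow_le_pow_left₀ (abs_nonneg (Dsum A (ext s) i)) hkey 2
          rwa [sq_abs, sq_abs] at h1
        have hsq' : ((Dsum A (ext s) i : ℤ) : ℝ) ^ 2 ≤ ((psum (ext s) i : ℤ) : ℝ) ^ 2 := by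
          exact_mod_cast hsq
        gcongr
      exact Finset.mem_filter.mpr ⟨hTF, hfy''⟩
    · -- injective
      intro s hs u hu hT'
      have heq : ∀ j, j < n → Tmap A (ext s) j = Tmap A (ext u) j := by
        intro j hj
        exact congrFun hT' ⟨j, hj⟩
      have := Tmap_inj heq
      funext k
      have h := this k.1 k.2
      simpa [hext, k.2] using h
  calc P {ω | L' ω ≤ y} ≤ (G'.card : ℝ≥0∞) * (1/2) ^ n := hub
  _ ≤ (G''.card : ℝ≥0∞) * (1/2) ^ n :=
      mul_le_mul_left (Nat.cast_le.mpr hcard) _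
  _ ≤ P {ω | L'' ω ≤ y} := hlb

end
end
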